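/- For real a, x with 0 < a < x, setting λ = x/a, the upper regularized incomplete gamma function satisfies Q(a,x) = ((λ e^{1-λ})^a / √(2πa)) · (1/(λ-1) + O(1/((λ-1)³ a) + 1/a)), uniformly over all 0 < a < x. -/

import Mathlib

open MeasureTheory Set Filter Topology Real
open scoped Nat

noncomputable def hS (t : ℝ) : ℝ := (t - 1/2) * Real.log t - t + Real.log (2*Real.pi) / 2

lemma hS_hasDeriv {t : ℝ} (ht : 0 < t) : HasDerivAt hS (Real.log t - 1/(2*t)) t := by
  have h1 : HasDerivAt (fun t : ℝ => (t - 1/2) * Real.log t) (Real.log t + (t - 1/2) * t⁻¹) t := by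
    exact (((hasDerivAt_id t).sub_const (1/2)).mul (Real.hasDerivAt_log ht.ne')).congr_deriv (by simp)
  have h2 := (h1.sub (hasDerivAt_id t)).add_const (Real.log (2*Real.pi) / 2)
  refine h2.congr_deriv ?_
  field_simp
  ring

lemma sqrtpi_le_stirling (n : ℕ) : Real.sqrt Real.pi ≤ Stirling.stirlingSeq (n+1) := by
  refine le_of_tendsto Stirling.tendsto_stirlingSeq_sqrt_pi ?_
  filter_upwards [eventually_ge_atTop (n+1)] with m hm
  obtain ⟨k, rfl⟩ := Nat.exists_eq_add_of_le hm
  have := Stirling.stirlingSeq'_antitone (Nat.le_add_right n k)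
  simpa [Function.comp, Nat.succ_eq_add_one, Nat.add_right_comm] using this

lemma log_stirling_sub_le (n : ℕ) :
    Real.log (Stirling.stirlingSeq (n+1)) - Real.log (Real.sqrt Real.pi) ≤ 1/(2*(n+1)) := by
  have keym : ∀ m : ℕ, Real.log (Stirling.stirlingSeq (n+1)) -
      Real.log (Stirling.stirlingSeq (n+1+m)) ≤ 1/(2*(n+1)) - 1/(2*(n+1+m)) := by
    intro m
    induction m with
    | zero => simp
    | succ k ih =>
      have step := Stirling.log_stirlingSeq_sub_log_stirlingSeq_succ (n+k+1)
      have hb : (1:ℝ)/(4 * (↑(n+k+1):ℝ)^2) ≤ 1/(2*(n+1+k)) - 1/(2*(n+1+k+1)) := by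
        push_cast
        rw [div_sub_div _ _ (by positivity) (by positivity), div_le_div_iff₀ (by positivity) (by positivity)]
        push_cast
        ring_nf
        nlinarith [Nat.cast_nonneg (α := ℝ) n, Nat.cast_nonneg (α := ℝ) k]
      have h2 : Real.log (Stirling.stirlingSeq (n+1+k)) - Real.log (Stirling.stirlingSeq (n+1+(k+1)))
          ≤ 1/(2*(↑n+1+↑k:ℝ)) - 1/(2*(↑n+1+↑k+1)) := by
        have e1 : n+1+(k+1) = n+k+2 := by omega
        have e2 : n+1+k = n+k+1 := by omega
        rw [e1, e2]
        refine le_trans step (le_trans (le_of_eq ?_) hb)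
        push_cast; ring_nf
      have h3 := add_le_add ih h2
      push_cast at h3 ⊢
      ring_nf at h3 ⊢
      linarith
  have hlim : Tendsto (fun m : ℕ => Real.log (Stirling.stirlingSeq (n+1)) -
      Real.log (Stirling.stirlingSeq (n+1+m))) atTop
      (𝓝 (Real.log (Stirling.stirlingSeq (n+1)) - Real.log (Real.sqrt Real.pi))) := by
    apply Tendsto.const_sub
    have h1 : Tendsto (fun m : ℕ => Stirling.stirlingSeq (n+1+m)) atTop (𝓝 (Real.sqrt Real.pi)) := by
      have := Stirling.tendsto_stirlingSeq_sqrt_pi.comp (tendsto_add_atTop_nat (n+1))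
      simpa [Function.comp_def, Nat.add_comm] using this
    exact (Real.continuousAt_log (by positivity)).tendsto.comp h1
  refine le_of_tendsto hlim (Filter.Eventually.of_forall fun m => (keym m).trans ?_)
  have : (0:ℝ) ≤ 1/(2*(↑n+1+↑m:ℝ)) := by positivity
  linarith

lemma eps_bounds (n : ℕ) (hn : 1 ≤ n) :
    0 ≤ Real.log (n ! : ℝ) - ((n:ℝ) + 1/2) * Real.log n + n - Real.log (2*Real.pi)/2 ∧
    Real.log (n ! : ℝ) - ((n:ℝ) + 1/2) * Real.log n + n - Real.log (2*Real.pi)/2 ≤ 1/(2*n) := by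
  obtain ⟨m, rfl⟩ : ∃ m, n = m + 1 := ⟨n - 1, by omega⟩
  have hnp : (0:ℝ) < (m:ℝ) + 1 := by positivity
  have hfact : (0:ℝ) < ((m+1)! : ℝ) := by positivity
  have hform : Real.log (Stirling.stirlingSeq (m+1)) =
      Real.log ((m+1)! : ℝ) - ((m+1:ℝ) + 1/2) * Real.log (m+1) + (m+1) - Real.log 2 / 2 := by
    rw [Stirling.log_stirlingSeq_formula]
    have h2 : Real.log (2 * ((m+1:ℕ):ℝ)) = Real.log 2 + Real.log ((m+1:ℕ):ℝ) :=
      Real.log_mul two_ne_zero (by positivity)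
    have h3 : Real.log (((m+1:ℕ):ℝ) / Real.exp 1) = Real.log ((m+1:ℕ):ℝ) - 1 := by
      rw [Real.log_div (by positivity) (Real.exp_ne_zero 1), Real.log_exp]
    rw [h2, h3]
    push_cast
    ring
  have hsq : Real.log (Real.sqrt Real.pi) = Real.log Real.pi / 2 := Real.log_sqrt Real.pi_pos.le
  have h2pi : Real.log (2*Real.pi) = Real.log 2 + Real.log Real.pi :=
    Real.log_mul two_ne_zero Real.pi_ne_zero
  have key : Real.log (Stirling.stirlingSeq (m+1)) - Real.log (Real.sqrt Real.pi) =
      Real.log ((m+1)! : ℝ) - (((m+1:ℕ):ℝ) + 1/2) * Real.log ((m+1:ℕ):ℝ) + ((m+1:ℕ):ℝ)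
        - Real.log (2*Real.pi)/2 := by
    rw [hform, hsq, h2pi]; push_cast; ring
  constructor
  · rw [← key]
    have := sqrtpi_le_stirling m
    have h0 : (0:ℝ) < Real.sqrt Real.pi := Real.sqrt_pos.2 Real.pi_pos
    linarith [Real.log_le_log h0 this]
  · rw [← key]
    have := log_stirling_sub_le m
    push_cast at this ⊢
    linarith

lemma delta_nat (n : ℕ) (hn : 1 ≤ n) :
    |Real.log (Real.Gamma ((n:ℝ)+1)) - hS ((n:ℝ)+1)| ≤ 1/(2*n) := by
  have hnR : (0:ℝ) < n := by exact_mod_cast hn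
  obtain ⟨he0, he1⟩ := eps_bounds n hn
  have hΓ : Real.Gamma ((n:ℝ)+1) = (n ! : ℝ) := Real.Gamma_nat_eq_factorial n
  -- bounds on L = log(n+1) - log n
  have hL : Real.log ((n:ℝ)+1) - Real.log n = Real.log (1 + (n:ℝ)⁻¹) := by
    rw [← Real.log_div (by positivity) (by positivity)]
    congr 1
    field_simp
  have hLu : Real.log (1 + (n:ℝ)⁻¹) ≤ (n:ℝ)⁻¹ := by
    have := Real.log_le_sub_one_of_pos (x := 1 + (n:ℝ)⁻¹) (by positivity)
    linarith
  have hLl : 2 / (2*(n:ℝ)+1) ≤ Real.log (1 + (n:ℝ)⁻¹) := by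
    have hs := Real.hasSum_log_one_add_inv (a := (n:ℝ)) hnR
    have := le_hasSum hs 0 (fun j _ => by positivity)
    simpa [div_eq_mul_inv] using this
  have hΔ : Real.log (Real.Gamma ((n:ℝ)+1)) - hS ((n:ℝ)+1) =
      (Real.log (n ! : ℝ) - ((n:ℝ) + 1/2) * Real.log n + n - Real.log (2*Real.pi)/2)
      + (1 - ((n:ℝ) + 1/2) * (Real.log ((n:ℝ)+1) - Real.log n)) := by
    rw [hΓ]; unfold hS; ring
  rw [hΔ, hL]
  have h1 : ((n:ℝ) + 1/2) * (2/(2*(n:ℝ)+1)) = 1 := by field_simp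
  have h2 : ((n:ℝ) + 1/2) * (n:ℝ)⁻¹ = 1 + 1/(2*(n:ℝ)) := by
    field_simp
  rw [abs_le]
  constructor
  · nlinarith [mul_le_mul_of_nonneg_left hLu (by positivity : (0:ℝ) ≤ (n:ℝ)+1/2)]
  · nlinarith [mul_le_mul_of_nonneg_left hLl (by positivity : (0:ℝ) ≤ (n:ℝ)+1/2)]

lemma hS_slope_bounds {b c : ℝ} (hb : 0 < b) (hbc : b ≤ c) :
    (c - b) * (Real.log b - 1/(2*b)) ≤ hS c - hS b ∧
    hS c - hS b ≤ (c - b) * (Real.log c - 1/(2*c)) := by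
  rcases eq_or_lt_of_le hbc with rfl | h
  · simp
  · obtain ⟨ξ, hξ, hslope⟩ := exists_hasDerivAt_eq_slope hS (fun t => Real.log t - 1/(2*t)) h
      (fun t ht => (hS_hasDeriv (lt_of_lt_of_le hb ht.1)).continuousAt.continuousWithinAt)
      (fun t ht => hS_hasDeriv (lt_trans hb ht.1))
    have hξ0 : 0 < ξ := lt_trans hb hξ.1
    have hc0 : 0 < c := lt_of_lt_of_le hb hbc
    rw [eq_div_iff (sub_ne_zero.2 h.ne')] at hslope
    have heq : hS c - hS b = (c - b) * (Real.log ξ - 1/(2*ξ)) := by linarith [hslope]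
    have hm1 : Real.log b ≤ Real.log ξ := Real.log_le_log hb hξ.1.le
    have hm2 : Real.log ξ ≤ Real.log c := Real.log_le_log hξ0 hξ.2.le
    have hi1 : 1/(2*ξ) ≤ 1/(2*b) := by
      apply one_div_le_one_div_of_le (by positivity); linarith [hξ.1]
    have hi2 : 1/(2*c) ≤ 1/(2*ξ) := by
      apply one_div_le_one_div_of_le (by positivity); linarith [hξ.2]
    constructor
    · rw [heq]
      apply mul_le_mul_of_nonneg_left _ (by linarith : (0:ℝ) ≤ c - b); linarith
    · rw [heq]
      apply mul_le_mul_of_nonneg_left _ (by linarith : (0:ℝ) ≤ c - b); linarith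

lemma log_add_one_sub_log {t : ℝ} (ht : 0 < t) : Real.log (t+1) - Real.log t ≤ 1/t := by
  have h1 : Real.log ((t+1)/t) ≤ (t+1)/t - 1 := Real.log_le_sub_one_of_pos (by positivity)
  rw [Real.log_div (by positivity) ht.ne'] at h1
  have h2 : (t+1)/t - 1 = 1/t := by field_simp; ring
  rw [h2] at h1
  linarith

set_option maxHeartbeats 2000000 in
lemma delta_real {a : ℝ} (ha : 2 ≤ a) : |Real.log (Real.Gamma a) - hS a| ≤ 8/a := by
  have ha0 : 0 < a := by linarith
  obtain ⟨m, hm⟩ : ∃ m : ℕ, ⌊a⌋₊ = m + 2 := ⟨⌊a⌋₊ - 2, by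
    have : 2 ≤ ⌊a⌋₊ := Nat.le_floor (by exact_mod_cast ha)
    omega⟩
  have hfl : ((m:ℝ) + 2) ≤ a := by
    have h := Nat.floor_le ha0.le (R := ℝ) (a := a)
    rw [hm] at h; push_cast at h; linarith
  have hfu : a < (m:ℝ) + 3 := by
    have h := Nat.lt_floor_add_one a
    rw [hm] at h; push_cast at h; linarith
  set N : ℝ := (m:ℝ) + 2 with hN
  clear_value N
  have hN0 : (0:ℝ) < N := by rw [hN]; positivity
  set s := a - N with hsdef
  clear_value s
  have hs0 : 0 ≤ s := by rw [hsdef]; linarith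
  have hs1 : s < 1 := by rw [hsdef]; linarith
  have hΔN : |Real.log (Real.Gamma N) - hS N| ≤ 1/(2*((m:ℝ)+1)) := by
    have h := delta_nat (m+1) (by omega)
    push_cast at h
    have e : ((m:ℝ)+1)+1 = N := by rw [hN]; try ring
    rw [e] at h; exact h
  have hΔN1 : |Real.log (Real.Gamma (N+1)) - hS (N+1)| ≤ 1/(2*((m:ℝ)+2)) := by
    have h := delta_nat (m+2) (by omega)
    push_cast at h
    have e : ((m:ℝ)+2)+1 = N+1 := by rw [hN]; try ring
    rw [e] at h; exact h
  have cvx := Real.convexOn_log_Gamma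
  set f := Real.log ∘ Real.Gamma with hf
  have hfval : ∀ t : ℝ, f t = Real.log (Real.Gamma t) := fun t => rfl
  clear_value f
  have hchord : f a ≤ (1-s) * f N + s * f (N+1) := by
    have h2 := cvx.2 (mem_Ioi.2 hN0) (mem_Ioi.2 (by linarith : (0:ℝ) < N+1))
      (by linarith : (0:ℝ) ≤ 1-s) hs0 (by ring : (1-s) + s = 1)
    have e : (1-s) • N + s • (N+1) = a := by
      simp only [smul_eq_mul]; rw [hsdef]; ring
    rw [e] at h2
    simpa [smul_eq_mul] using h2
  have hgamma_add : f (N+2) - f (N+1) = Real.log (N+1) := by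
    have h1 : Real.Gamma (N+1+1) = (N+1) * Real.Gamma (N+1) := Real.Gamma_add_one (by positivity)
    have hΓpos : 0 < Real.Gamma (N+1) := Real.Gamma_pos_of_pos (by positivity)
    have e : N+2 = N+1+1 := by ring
    rw [hfval, hfval, e, h1, Real.log_mul (by positivity) hΓpos.ne']
    ring
  have hlow : f a ≥ f (N+1) - (1-s) * Real.log (N+1) := by
    have hw1 : (0:ℝ) < 2 - s := by linarith
    have hw2 : (0:ℝ) ≤ (1-s)/(2-s) := div_nonneg (by linarith) hw1.le
    have hw3 : 1/(2-s) + (1-s)/(2-s) = 1 := by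
      rw [← add_div, div_eq_one_iff_eq hw1.ne']; ring
    have h2 := cvx.2 (mem_Ioi.2 ha0) (mem_Ioi.2 (by linarith : (0:ℝ) < N+2))
      (by positivity : (0:ℝ) ≤ 1/(2-s)) hw2 hw3
    have e : (1/(2-s)) • a + ((1-s)/(2-s)) • (N+2) = N+1 := by
      simp only [smul_eq_mul]
      rw [div_mul_eq_mul_div, div_mul_eq_mul_div, ← add_div, div_eq_iff hw1.ne']
      rw [hsdef]; ring
    rw [e] at h2
    simp only [smul_eq_mul] at h2
    have e2 : (2-s) * (1/(2-s) * f a + (1-s)/(2-s) * f (N+2)) = f a + (1-s) * f (N+2) := by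
      field_simp
    have h4 := mul_le_mul_of_nonneg_left h2 hw1.le
    rw [e2] at h4
    have h5 : (1-s) * (f (N+2) - f (N+1)) = (1-s) * Real.log (N+1) := by rw [hgamma_add]
    linarith [h4, h5]
  have g1 := (hS_slope_bounds ha0 (by linarith : a ≤ N+1)).2
  have g1' := (hS_slope_bounds ha0 (by linarith : a ≤ N+1)).1
  have g2 := (hS_slope_bounds hN0 (by linarith : N ≤ a)).1
  have hloglog : Real.log (N+1) - Real.log N ≤ 1/N := log_add_one_sub_log hN0
  have hlogmono : Real.log N ≤ Real.log a := Real.log_le_log hN0 hfl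
  have hlogmono2 : Real.log a ≤ Real.log (N+1) := Real.log_le_log ha0 (by linarith)
  have hlogNN1 : Real.log N ≤ Real.log (N+1) := Real.log_le_log hN0 (by linarith)
  -- upper estimate
  have hup : Real.log (Real.Gamma a) - hS a ≤ 1/(2*((m:ℝ)+1)) + (1/N + 1/(2*N)) := by
    have habs1 := (abs_le.1 hΔN).2
    have habs2 := (abs_le.1 hΔN1).2
    have habs2' : 1/(2*((m:ℝ)+2)) ≤ 1/(2*((m:ℝ)+1)) := by
      apply one_div_le_one_div_of_le (by positivity); push_cast; linarith
    have eNa : N+1-a = 1-s := by rw [hsdef]; ring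
    rw [eNa] at g1
    have t1 := mul_le_mul_of_nonneg_left g1 hs0
    have t2 := mul_le_mul_of_nonneg_left g2 (by linarith : (0:ℝ) ≤ 1-s)
    have hi3 : 1/(2*(N+1)) ≤ 1/(2*N) := by
      apply one_div_le_one_div_of_le (by positivity); linarith
    have hBpos : (0:ℝ) ≤ (Real.log (N+1) - 1/(2*(N+1))) - (Real.log N - 1/(2*N)) := by
      linarith
    have hss : s * (1-s) ≤ 1 := by nlinarith
    have hssB := mul_nonneg (sub_nonneg.2 hss) hBpos
    have hB : (Real.log (N+1) - 1/(2*(N+1))) - (Real.log N - 1/(2*N)) ≤ 1/N + 1/(2*N) := by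
      have : (0:ℝ) ≤ 1/(2*(N+1)) := by positivity
      linarith
    have key : Real.log (Real.Gamma a) - hS a ≤
        (1-s) * (f N - hS N) + s * (f (N+1) - hS (N+1))
        + (s * (hS (N+1) - hS a) - (1-s) * (hS a - hS N)) := by
      rw [← hfval a]; linarith [hchord]
    have hconv : (1-s) * (f N - hS N) + s * (f (N+1) - hS (N+1)) ≤ 1/(2*((m:ℝ)+1)) := by
      rw [hfval, hfval]
      have u1 := mul_le_mul_of_nonneg_left habs1 (by linarith : (0:ℝ) ≤ 1-s)
      have u2 := mul_le_mul_of_nonneg_left (le_trans habs2 habs2') hs0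
      have u3 : (1-s) * (1/(2*((m:ℝ)+1))) + s * (1/(2*((m:ℝ)+1))) = 1/(2*((m:ℝ)+1)) := by ring
      linarith [u1, u2]
    have w1 : s * ((1-s) * (Real.log (N+1) - 1/(2*(N+1)))) - (1-s) * ((a-N) * (Real.log N - 1/(2*N)))
        = s * (1-s) * ((Real.log (N+1) - 1/(2*(N+1))) - (Real.log N - 1/(2*N))) := by
      rw [hsdef]; ring
    have w2 : (1 - s*(1-s)) * ((Real.log (N+1) - 1/(2*(N+1))) - (Real.log N - 1/(2*N)))
        = ((Real.log (N+1) - 1/(2*(N+1))) - (Real.log N - 1/(2*N)))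
          - s * (1-s) * ((Real.log (N+1) - 1/(2*(N+1))) - (Real.log N - 1/(2*N))) := by ring
    linarith [key, hconv, t1, t2, hssB, hB, w1, w2]
  -- lower estimate
  have hlo : -(1/(2*((m:ℝ)+2)) + (1/N + 1/(2*a))) ≤ Real.log (Real.Gamma a) - hS a := by
    have habs2 := (abs_le.1 hΔN1).1
    have eNa : N+1-a = 1-s := by rw [hsdef]; ring
    rw [eNa] at g1'
    have hbr0 : (0:ℝ) ≤ Real.log (N+1) - Real.log a + 1/(2*a) := by
      have : (0:ℝ) ≤ 1/(2*a) := by positivity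
      linarith
    have hbr1 : Real.log (N+1) - Real.log a + 1/(2*a) ≤ Real.log (N+1) - Real.log N + 1/(2*a) := by
      linarith
    have hbr : (1-s) * (Real.log (N+1) - Real.log a + 1/(2*a)) ≤
        Real.log (N+1) - Real.log N + 1/(2*a) := by
      have hsx := mul_nonneg hs0 hbr0
      have e : (1-s) * (Real.log (N+1) - Real.log a + 1/(2*a)) =
          (Real.log (N+1) - Real.log a + 1/(2*a)) - s*(Real.log (N+1) - Real.log a + 1/(2*a)) := by
        ring
      linarith [hsx, hbr1, e]
    have key : Real.log (Real.Gamma a) - hS a ≥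
        (f (N+1) - hS (N+1)) - (1-s) * (Real.log (N+1) - Real.log a + 1/(2*a)) := by
      rw [← hfval a]
      linarith [hlow, g1']
    rw [hfval] at key
    have hfin : Real.log (N+1) - Real.log N + 1/(2*a) ≤ 1/N + 1/(2*a) := by linarith
    linarith [key, hbr, habs2, hfin]
  -- numeric conclusion
  have i1 : 1/(2*((m:ℝ)+1)) ≤ 3/(2*a) := by
    rw [div_le_div_iff₀ (by positivity) (by positivity)]
    nlinarith
  have i2 : 1/N ≤ 3/(2*a) := by
    rw [hN, div_le_div_iff₀ (by positivity) (by positivity)]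
    nlinarith
  have i3 : 1/(2*N) ≤ 3/(4*a) := by
    rw [hN, div_le_div_iff₀ (by positivity) (by positivity)]
    nlinarith
  have i4 : 1/(2*((m:ℝ)+2)) ≤ 3/(4*a) := by
    rw [div_le_div_iff₀ (by positivity) (by positivity)]
    nlinarith
  have i5 : 1/(2*a) ≤ 3/(4*a) := by
    rw [div_le_div_iff₀ (by positivity) (by positivity)]
    nlinarith
  have e8 : (8:ℝ)/a = 3/(2*a) + 3/(2*a) + 3/(4*a) + 3/(4*a) + 3/(4*a) + 11/(4*a) := by
    field_simp
    ring
  have h74 : (0:ℝ) ≤ 11/(4*a) := by positivity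
  have h34 : (0:ℝ) ≤ 3/(4*a) := by positivity
  have h32 : (0:ℝ) ≤ 3/(2*a) := by positivity
  rw [abs_le]
  constructor
  · rw [neg_le]
    refine le_trans (neg_le_neg hlo) ?_
    rw [neg_neg, e8]
    linarith
  · refine le_trans hup ?_
    rw [e8]
    linarith

lemma Gamma_add_one_lower {a : ℝ} (ha : 0 < a) : Real.exp (-2) ≤ Real.Gamma (a+1) := by
  have h1 : 0 < a + 1 := by linarith
  rw [Real.Gamma_eq_integral h1]
  have hconv := Real.GammaIntegral_convergent h1
  have hsub : Ioc (1:ℝ) 2 ⊆ Ioi (0:ℝ) := fun t ht => lt_of_lt_of_le one_pos ht.1.le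
  have hstep1 : ∫ x in Ioc (1:ℝ) 2, Real.exp (-x) * x ^ (a+1-1) ≤
      ∫ x in Ioi (0:ℝ), Real.exp (-x) * x ^ (a+1-1) := by
    apply setIntegral_mono_set hconv
    · filter_upwards [ae_restrict_mem measurableSet_Ioi] with x hx
      simp only [Pi.zero_apply]
      have hx0 : (0:ℝ) < x := hx
      positivity
    · exact HasSubset.Subset.eventuallyLE hsub
  refine le_trans ?_ hstep1
  have hstep2 : ∫ x in Ioc (1:ℝ) 2, Real.exp (-2) ≤
      ∫ x in Ioc (1:ℝ) 2, Real.exp (-x) * x ^ (a+1-1) := by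
    apply setIntegral_mono_on
    · exact integrableOn_const (by rw [Real.volume_Ioc]; exact ENNReal.ofReal_ne_top)
    · exact hconv.mono_set hsub
    · exact measurableSet_Ioc
    · intro x hx
      have hx1 : (1:ℝ) ≤ x := hx.1.le
      have hx2 : x ≤ 2 := hx.2
      have e1 : Real.exp (-2) ≤ Real.exp (-x) := Real.exp_le_exp.2 (by linarith)
      have e2 : (1:ℝ) ≤ x ^ (a+1-1) := by
        rw [show a+1-1 = a by ring]
        exact Real.one_le_rpow hx1 ha.le
      nlinarith [Real.exp_pos (-x), Real.exp_pos (-2)]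
  refine le_trans ?_ hstep2
  rw [setIntegral_const, measureReal_def, Real.volume_Ioc, smul_eq_mul]
  rw [ENNReal.toReal_ofReal (by norm_num : (0:ℝ) ≤ 2 - 1)]
  norm_num

noncomputable def KS : ℝ := Real.exp ((5/2)*Real.log 2 + Real.log (2*Real.pi)/2 + 2)

lemma stirling_small {a : ℝ} (ha : 0 < a) (ha2 : a ≤ 2) :
    Real.exp (hS a) ≤ KS * Real.Gamma a := by
  have hG : 0 < Real.Gamma a := Real.Gamma_pos_of_pos ha
  have hexp : (a + 1/2) * Real.log a ≤ (5/2) * Real.log 2 := by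
    have hlog2 : (0:ℝ) ≤ Real.log 2 := Real.log_nonneg one_le_two
    rcases le_or_gt a 1 with h1 | h1
    · have : Real.log a ≤ 0 := Real.log_nonpos ha.le h1
      nlinarith
    · have h2 : Real.log a ≤ Real.log 2 := Real.log_le_log ha ha2
      have h3 : (0:ℝ) ≤ Real.log a := Real.log_nonneg h1.le
      nlinarith
  have key : Real.exp (hS a) * a ≤ KS * (Real.Gamma a * a) := by
    have lhs_eq : Real.exp (hS a) * a = Real.exp (hS a + Real.log a) := by
      rw [Real.exp_add, Real.exp_log ha]
    have lhs_le : Real.exp (hS a + Real.log a) ≤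
        Real.exp ((5/2)*Real.log 2 + Real.log (2*Real.pi)/2) := by
      apply Real.exp_le_exp.2
      unfold hS
      nlinarith [hexp, ha]
    have rhs_ge : KS * Real.exp (-2) ≤ KS * (Real.Gamma a * a) := by
      apply mul_le_mul_of_nonneg_left _ (Real.exp_pos _).le
      have := Gamma_add_one_lower ha
      rw [Real.Gamma_add_one ha.ne'] at this
      linarith [this]
    have eq2 : KS * Real.exp (-2) = Real.exp ((5/2)*Real.log 2 + Real.log (2*Real.pi)/2) := by
      rw [KS, ← Real.exp_add]
      ring_nf
    rw [lhs_eq]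
    calc Real.exp (hS a + Real.log a) ≤ Real.exp ((5/2)*Real.log 2 + Real.log (2*Real.pi)/2) := lhs_le
      _ = KS * Real.exp (-2) := eq2.symm
      _ ≤ KS * (Real.Gamma a * a) := rhs_ge
  rw [← mul_assoc] at key
  calc Real.exp (hS a) = Real.exp (hS a) * a / a := by field_simp
    _ ≤ KS * Real.Gamma a * a / a := by gcongr
    _ = KS * Real.Gamma a := by field_simp

lemma abs_exp_sub_one_le (u : ℝ) : |Real.exp u - 1| ≤ |u| * Real.exp |u| := by
  rcases le_or_gt 0 u with h | h
  · rw [abs_of_nonneg h,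
      abs_of_nonneg (by linarith [Real.add_one_le_exp u] : (0:ℝ) ≤ Real.exp u - 1)]
    have h2 : Real.exp (-u) * Real.exp u = 1 := by rw [← Real.exp_add]; simp
    have h3 := mul_le_mul_of_nonneg_right (Real.add_one_le_exp (-u)) (Real.exp_pos u).le
    nlinarith [h3, h2]
  · have hlt : Real.exp u < 1 := by
      calc Real.exp u < Real.exp 0 := Real.exp_lt_exp.2 h
        _ = 1 := Real.exp_zero
    rw [abs_of_neg h, abs_of_nonpos (by linarith : Real.exp u - 1 ≤ 0)]
    have h1 := Real.add_one_le_exp u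
    have h4 : (1:ℝ) ≤ Real.exp (-u) := Real.one_le_exp (by linarith)
    have h5 := mul_le_mul_of_nonneg_left h4 (by linarith : (0:ℝ) ≤ -u)
    linarith

lemma stirling_bounds : ∃ C₂ K : ℝ, 0 ≤ C₂ ∧ 0 ≤ K ∧ ∀ a : ℝ, 0 < a →
    |Real.exp (hS a) / Real.Gamma a - 1| ≤ C₂ / a ∧ Real.exp (hS a) ≤ K * Real.Gamma a := by
  have hKS : 0 < KS := by unfold KS; positivity
  refine ⟨2*(KS+1) + 8*Real.exp 4, KS + 1 + 4*Real.exp 4, by positivity, by positivity, ?_⟩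
  intro a ha
  have hG := Real.Gamma_pos_of_pos ha
  rcases le_or_gt a 2 with h2 | h2
  · have hsm := stirling_small ha h2
    have hr : Real.exp (hS a) / Real.Gamma a ≤ KS := by rw [div_le_iff₀ hG]; linarith
    have hr0 : 0 ≤ Real.exp (hS a) / Real.Gamma a := by positivity
    constructor
    · have hb : |Real.exp (hS a)/Real.Gamma a - 1| ≤ KS + 1 := by
        rw [abs_le]; constructor <;> linarith
      refine le_trans hb ?_
      rw [le_div_iff₀ ha]
      nlinarith [Real.exp_pos (4:ℝ)]
    · nlinarith [hsm, hG, Real.exp_pos (4:ℝ)]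
  · have hd := delta_real h2.le
    set Δ := Real.log (Real.Gamma a) - hS a with hΔ
    have hq : Real.exp (hS a) / Real.Gamma a = Real.exp (-Δ) := by
      rw [hΔ, neg_sub, Real.exp_sub, Real.exp_log hG]
    have h84 : (8:ℝ)/a ≤ 4 := by rw [div_le_iff₀ ha]; linarith
    have habs := abs_exp_sub_one_le (-Δ)
    rw [abs_neg] at habs
    have hee : Real.exp |Δ| ≤ Real.exp 4 := Real.exp_le_exp.2 (le_trans hd h84)
    have hb : |Real.exp (-Δ) - 1| ≤ (8/a) * Real.exp 4 := by
      refine le_trans habs ?_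
      exact mul_le_mul hd hee (Real.exp_pos _).le (by positivity)
    constructor
    · rw [hq]
      refine le_trans hb ?_
      rw [div_mul_eq_mul_div]
      gcongr
      nlinarith [Real.exp_pos (4:ℝ)]
    · have h1 : Real.exp (-Δ) ≤ 1 + 4*Real.exp 4 := by
        have hu := (abs_le.1 hb).2
        have h3 : (8/a)*Real.exp 4 ≤ 4*Real.exp 4 :=
          mul_le_mul_of_nonneg_right h84 (Real.exp_pos 4).le
        linarith
      rw [← hq, div_le_iff₀ hG] at h1
      nlinarith [h1, hG, hKS]

set_option maxHeartbeats 2000000 in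
/-- Uniform Temme-type estimate for the upper regularized incomplete gamma function:
with `λ = x/a`, `Q(a,x) = ((λ e^{1-λ})^a/√(2πa)) (1/(λ-1) + O(1/((λ-1)³ a) + 1/a))`
uniformly for `0 < a < x`. -/
theorem upper_incomplete_gamma_asymp :
    ∃ C : ℝ, ∀ a x : ℝ, 0 < a → a < x →
      |(1 / Real.Gamma a) * (∫ t in Ioi x, t ^ (a - 1) * Real.exp (-t)) -
          ((x / a) * Real.exp (1 - x / a)) ^ a / (Real.sqrt (2 * Real.pi * a) * (x / a - 1))| ≤
        C * (((x / a) * Real.exp (1 - x / a)) ^ a / Real.sqrt (2 * Real.pi * a)) *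
          (1 / ((x / a - 1) ^ 3 * a) + 1 / a) := by
  obtain ⟨C₂, K, hC₂0, hK0, hSB⟩ := stirling_bounds
  refine ⟨2*K + C₂, ?_⟩
  intro a x ha hax
  have hx : 0 < x := ha.trans hax
  obtain ⟨hS1, hS2⟩ := hSB a ha
  have hG : 0 < Real.Gamma a := Real.Gamma_pos_of_pos ha
  set G := Real.Gamma a with hGdef
  set Sa := Real.exp (hS a) with hSadef
  have hSa0 : 0 < Sa := Real.exp_pos _
  set T := x ^ a * Real.exp (-x) with hTdef
  have hT0 : 0 < T := by
    have : (0:ℝ) < x ^ a := Real.rpow_pos_of_pos hx a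
    positivity
  have hxa0 : (0:ℝ) < x - a := by linarith
  -- integrability of f on Ioi x
  have hf_int : IntegrableOn (fun t : ℝ => t ^ (a-1) * Real.exp (-t)) (Ioi x) := by
    have h1 := (Real.GammaIntegral_convergent ha).mono_set (Ioi_subset_Ioi hx.le)
    have e : (fun t : ℝ => t ^ (a-1) * Real.exp (-t)) = fun t : ℝ => Real.exp (-t) * t ^ (a-1) := by
      funext t; ring
    rw [e]; exact h1
  -- FTC for φ(t) = (t-a) t^(a-1) e^(-t)
  have hderivφ : ∀ t ∈ Ici x, HasDerivAt (fun t : ℝ => -(t ^ a * Real.exp (-t)))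
      ((t - a) * (t ^ (a-1) * Real.exp (-t))) t := by
    intro t ht
    have ht0 : 0 < t := lt_of_lt_of_le hx ht
    have h1 : HasDerivAt (fun t : ℝ => t ^ a) (a * t ^ (a-1)) t :=
      Real.hasDerivAt_rpow_const (Or.inl ht0.ne')
    have h2 : HasDerivAt (fun t : ℝ => Real.exp (-t)) (-Real.exp (-t)) t := by
      simpa [Function.comp_def] using (Real.hasDerivAt_exp (-t)).comp t (hasDerivAt_neg t)
    have h3 := (h1.mul h2).neg
    refine h3.congr_deriv ?_
    have e : t ^ a = t ^ (a-1) * t := by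
      rw [← Real.rpow_add_one ht0.ne' (a-1)]; ring_nf
    rw [e]; ring
  have htendφ : Tendsto (fun t : ℝ => -(t ^ a * Real.exp (-t))) atTop (𝓝 0) := by
    have h := tendsto_rpow_mul_exp_neg_mul_atTop_nhds_zero a 1 one_pos
    have h2 := h.neg
    rw [neg_zero] at h2
    refine h2.congr (fun t => ?_)
    norm_num
  have hφ_nonneg : ∀ t ∈ Ioi x, 0 ≤ (t - a) * (t ^ (a-1) * Real.exp (-t)) := by
    intro t ht
    have ht0 : 0 < t := lt_trans hx ht
    have hta : a ≤ t := le_of_lt (lt_trans hax ht)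
    have h1 : (0:ℝ) ≤ t ^ (a-1) := (Real.rpow_pos_of_pos ht0 _).le
    have h2 : (0:ℝ) < Real.exp (-t) := Real.exp_pos _
    have h3 : (0:ℝ) ≤ t - a := by linarith
    positivity
  have hφ_int : IntegrableOn (fun t : ℝ => (t - a) * (t ^ (a-1) * Real.exp (-t))) (Ioi x) :=
    integrableOn_Ioi_deriv_of_nonneg' hderivφ hφ_nonneg htendφ
  have hφ_val : ∫ t in Ioi x, (t - a) * (t ^ (a-1) * Real.exp (-t)) = T := by
    rw [integral_Ioi_of_hasDerivAt_of_tendsto' hderivφ hφ_int htendφ, hTdef]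
    ring
  -- the comparison exponential
  set c := (x - a)/x with hcdef
  have hc0 : 0 < c := div_pos hxa0 hx
  have hderivD : ∀ t ∈ Ici x, HasDerivAt (fun t : ℝ => -(((t-x)/c + 1/c^2) * Real.exp (-(c*(t-x)))))
      ((t-x) * Real.exp (-(c*(t-x)))) t := by
    intro t _
    have h1 : HasDerivAt (fun t : ℝ => (t-x)/c + 1/c^2) c⁻¹ t := by
      have h := (((hasDerivAt_id t).sub_const x).div_const c).add_const (1/c^2)
      simp only [id_eq] at h
      rw [one_div c] at h
      exact h
    have h2 : HasDerivAt (fun t : ℝ => Real.exp (-(c*(t-x)))) (-c * Real.exp (-(c*(t-x)))) t := by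
      have h3 : HasDerivAt (fun t : ℝ => -(c*(t-x))) (-c) t := by
        exact (((hasDerivAt_id t).sub_const x).const_mul c).neg.congr_deriv (by simp)
      exact ((Real.hasDerivAt_exp _).comp t h3).congr_deriv (by ring)
    have h4 := (h1.mul h2).neg
    refine h4.congr_deriv ?_
    field_simp
    ring
  have htendD : Tendsto (fun t : ℝ => -(((t-x)/c + 1/c^2) * Real.exp (-(c*(t-x))))) atTop (𝓝 0) := by
    have k1 : Tendsto (fun s : ℝ => s * Real.exp (-(c*s))) atTop (𝓝 0) := by
      have h := tendsto_rpow_mul_exp_neg_mul_atTop_nhds_zero 1 c hc0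
      apply h.congr'
      filter_upwards [eventually_gt_atTop 0] with s hs
      rw [Real.rpow_one, neg_mul]
    have k2 : Tendsto (fun s : ℝ => Real.exp (-(c*s))) atTop (𝓝 0) := by
      have h5 : Tendsto (fun s : ℝ => c*s) atTop atTop :=
        Tendsto.const_mul_atTop hc0 tendsto_id
      exact Real.tendsto_exp_atBot.comp (tendsto_neg_atTop_atBot.comp h5)
    have key : Tendsto (fun s : ℝ => -((s/c + 1/c^2) * Real.exp (-(c*s)))) atTop (𝓝 0) := by
      have h6 := ((k1.const_mul (1/c)).add (k2.const_mul (1/c^2))).neg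
      simp only [mul_zero, add_zero, neg_zero] at h6
      refine h6.congr (fun s => ?_)
      field_simp
    have h7 : Tendsto (fun t : ℝ => t - x) atTop atTop := tendsto_atTop_add_const_right atTop (-x) tendsto_id
    exact key.comp h7
  have hD_nonneg : ∀ t ∈ Ioi x, 0 ≤ (t-x) * Real.exp (-(c*(t-x))) := by
    intro t ht
    have : x < t := ht
    have h1 : (0:ℝ) ≤ t - x := by linarith
    positivity
  have hD_int : IntegrableOn (fun t : ℝ => (t-x) * Real.exp (-(c*(t-x)))) (Ioi x) :=
    integrableOn_Ioi_deriv_of_nonneg' hderivD hD_nonneg htendD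
  have hD_val : ∫ t in Ioi x, (t-x) * Real.exp (-(c*(t-x))) = 1/c^2 := by
    rw [integral_Ioi_of_hasDerivAt_of_tendsto' hderivD hD_int htendD]
    norm_num
  -- J and its bounds
  set J := ∫ t in Ioi x, (t-x) * (t ^ (a-1) * Real.exp (-t)) with hJdef
  have hJ_int : IntegrableOn (fun t : ℝ => (t-x) * (t ^ (a-1) * Real.exp (-t))) (Ioi x) := by
    have e : (fun t : ℝ => (t-x) * (t ^ (a-1) * Real.exp (-t))) =
        fun t : ℝ => (t-a) * (t^(a-1)*Real.exp (-t)) - (x-a) * (t^(a-1)*Real.exp (-t)) := by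
      funext t; ring
    rw [e]
    exact hφ_int.sub (hf_int.const_mul (x-a))
  have hJ0 : 0 ≤ J := by
    rw [hJdef]
    apply setIntegral_nonneg measurableSet_Ioi
    intro t ht
    have htx : x < t := ht
    have ht0 : 0 < t := lt_trans hx htx
    have h1 : (0:ℝ) ≤ t ^ (a-1) := (Real.rpow_pos_of_pos ht0 _).le
    have h2 : (0:ℝ) ≤ t - x := by linarith
    positivity
  -- pointwise bound
  have hpt : ∀ t ∈ Ioi x, (t-x) * (t ^ (a-1) * Real.exp (-t)) ≤
      (T/x) * ((t-x) * Real.exp (-(c*(t-x)))) := by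
    intro t ht
    have htx : x < t := ht
    have ht0 : 0 < t := lt_trans hx htx
    have hlog : Real.log t - Real.log x ≤ (t-x)/x := by
      rw [← Real.log_div ht0.ne' hx.ne']
      have h1 := Real.log_le_sub_one_of_pos (div_pos ht0 hx)
      have e : t/x - 1 = (t-x)/x := by field_simp
      rw [e] at h1
      exact h1
    have hexp : t ^ a * Real.exp (-t) ≤ T * Real.exp (-(c*(t-x))) := by
      rw [hTdef, Real.rpow_def_of_pos ht0, Real.rpow_def_of_pos hx,
        ← Real.exp_add, ← Real.exp_add, ← Real.exp_add]
      apply Real.exp_le_exp.2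
      have hmul := mul_le_mul_of_nonneg_left hlog ha.le
      rw [hcdef]
      have e2 : a * ((t-x)/x) = (t - x) - ((x-a)/x)*(t-x) := by field_simp; ring
      nlinarith [hmul, e2]
    have e3 : t ^ (a-1) * Real.exp (-t) = (t ^ a * Real.exp (-t))/t := by
      rw [Real.rpow_sub ht0, Real.rpow_one]
      ring
    have e4 : (t ^ a * Real.exp (-t))/t ≤ (t ^ a * Real.exp (-t))/x := by
      have h1 : (0:ℝ) ≤ t ^ a * Real.exp (-t) := by
        have := (Real.rpow_pos_of_pos ht0 a).le
        positivity
      apply div_le_div_of_nonneg_left h1 hx htx.le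
    have e5 : (t ^ a * Real.exp (-t))/x ≤ (T * Real.exp (-(c*(t-x))))/x := by
      gcongr
    have chain : t ^ (a-1) * Real.exp (-t) ≤ (T/x) * Real.exp (-(c*(t-x))) := by
      rw [e3]
      calc (t ^ a * Real.exp (-t))/t ≤ (t ^ a * Real.exp (-t))/x := e4
        _ ≤ (T * Real.exp (-(c*(t-x))))/x := e5
        _ = (T/x) * Real.exp (-(c*(t-x))) := by ring
    calc (t-x) * (t ^ (a-1) * Real.exp (-t)) ≤ (t-x) * ((T/x) * Real.exp (-(c*(t-x)))) := by
          apply mul_le_mul_of_nonneg_left chain (by linarith : (0:ℝ) ≤ t - x)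
      _ = (T/x) * ((t-x) * Real.exp (-(c*(t-x)))) := by ring
  have hJle : J ≤ T * x/(x-a)^2 := by
    have h1 : J ≤ ∫ t in Ioi x, (T/x) * ((t-x) * Real.exp (-(c*(t-x)))) := by
      rw [hJdef]
      exact setIntegral_mono_on hJ_int (hD_int.const_mul (T/x)) measurableSet_Ioi hpt
    rw [integral_const_mul, hD_val] at h1
    have e : (T/x) * (1/c^2) = T * x/(x-a)^2 := by
      rw [hcdef]
      field_simp
    linarith [e ▸ h1]
  -- the splitting identity
  set I := ∫ t in Ioi x, t ^ (a-1) * Real.exp (-t) with hIdef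
  have hsplit : T = J + (x-a) * I := by
    rw [← hφ_val, hJdef, hIdef]
    have e : (fun t : ℝ => (t-a)*(t^(a-1)*Real.exp (-t))) =
        fun t : ℝ => (t-x)*(t^(a-1)*Real.exp (-t)) + (x-a)*(t^(a-1)*Real.exp (-t)) := by
      funext t; ring
    rw [e, integral_add hJ_int (hf_int.const_mul (x-a)), integral_const_mul]
  have hIeq : I = (T - J)/(x-a) := by
    rw [eq_div_iff hxa0.ne']
    linarith [hsplit]
  -- u and algebraic substitutions
  set u := x/a - 1 with hudef
  have hu0 : 0 < u := by
    rw [hudef, sub_pos]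
    exact (one_lt_div ha).2 hax
  have hxa : x - a = a*u := by rw [hudef]; field_simp
  have hxau : x = a*(u+1) := by rw [hudef]; field_simp; ring
  -- the M identity
  have hM : ((x/a) * Real.exp (1 - x/a)) ^ a / Real.sqrt (2*Real.pi*a) = T/(a*Sa) := by
    have hlam0 : (0:ℝ) < x/a := div_pos hx ha
    have hbase : (0:ℝ) < (x/a)*Real.exp (1-x/a) := by positivity
    have hMnum : ((x/a)*Real.exp (1-x/a))^a =
        Real.exp ((Real.log x - Real.log a + (1 - x/a)) * a) := by
      rw [Real.rpow_def_of_pos hbase]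
      congr 1
      rw [Real.log_mul (ne_of_gt hlam0) (Real.exp_ne_zero _), Real.log_exp,
        Real.log_div hx.ne' ha.ne']
    have hsqrt : Real.sqrt (2*Real.pi*a) = Real.exp ((Real.log (2*Real.pi) + Real.log a)/2) := by
      rw [← Real.log_mul (by positivity) ha.ne']
      rw [← Real.log_sqrt (by positivity : (0:ℝ) ≤ 2*Real.pi*a)]
      rw [Real.exp_log (Real.sqrt_pos.2 (by positivity))]
    have hTexp : T = Real.exp (Real.log x * a - x) := by
      rw [hTdef, Real.rpow_def_of_pos hx, ← Real.exp_add, sub_eq_add_neg]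
    have haSa : a * Sa = Real.exp (Real.log a + hS a) := by
      rw [Real.exp_add, Real.exp_log ha, hSadef]
    rw [hMnum, hsqrt, hTexp, haSa, ← Real.exp_sub, ← Real.exp_sub]
    congr 1
    unfold hS
    field_simp
    try ring
  -- rewrite the goal
  have hgoal2 : ((x/a) * Real.exp (1 - x/a)) ^ a / (Real.sqrt (2*Real.pi*a) * (x/a - 1)) =
      (T/(a*Sa))/u := by
    rw [← div_div, hM]
  rw [hgoal2, hM]
  -- key algebraic identity
  have key : 1/G * I - (T/(a*Sa))/u = (T*(Sa-G)/(G*Sa) - J/G)/(x-a) := by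
    rw [hIeq]
    have hu_eq : u = (x-a)/a := by rw [hxa]; field_simp
    rw [hu_eq]
    field_simp
    ring
  rw [key]
  -- bound the absolute value
  have habs : |(T*(Sa-G)/(G*Sa) - J/G)/(x-a)| ≤
      (T*|Sa-G|/(G*Sa) + J/G)/(x-a) := by
    rw [abs_div, abs_of_pos hxa0]
    gcongr ?_ / (x-a)
    calc |T*(Sa-G)/(G*Sa) - J/G| ≤ |T*(Sa-G)/(G*Sa)| + |J/G| := abs_sub _ _
      _ = T*|Sa-G|/(G*Sa) + J/G := by
        rw [abs_div, abs_div, abs_mul, abs_of_pos hT0, abs_of_pos (mul_pos hG hSa0),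
          abs_of_nonneg hJ0, abs_of_pos hG]
  refine le_trans habs ?_
  -- auxiliary inequalities
  have hine1 : 1/(u*a) ≤ 1/(u^3*a) + 1/a := by
    rcases le_or_gt u 1 with h1 | h1
    · have h2 : u^3*a ≤ u*a := by
        nlinarith [mul_nonneg (mul_nonneg (mul_nonneg ha.le hu0.le) (sub_nonneg.2 h1))
          (by linarith : (0:ℝ) ≤ 1 + u)]
      have h3 : 1/(u*a) ≤ 1/(u^3*a) := one_div_le_one_div_of_le (by positivity) h2
      have h4 : (0:ℝ) ≤ 1/a := by positivity
      linarith
    · have h2 : a ≤ u*a := by nlinarith [mul_le_mul_of_nonneg_right h1.le ha.le]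
      have h3 : 1/(u*a) ≤ 1/a := one_div_le_one_div_of_le ha h2
      have h4 : (0:ℝ) ≤ 1/(u^3*a) := by positivity
      linarith
  have hine2 : 1/(u^2*a) ≤ 1/(u^3*a) + 1/a := by
    rcases le_or_gt u 1 with h1 | h1
    · have h2 : u^3*a ≤ u^2*a := by
        nlinarith [mul_nonneg (mul_nonneg ha.le (mul_nonneg hu0.le hu0.le)) (sub_nonneg.2 h1)]
      have h3 : 1/(u^2*a) ≤ 1/(u^3*a) := one_div_le_one_div_of_le (by positivity) h2
      have h4 : (0:ℝ) ≤ 1/a := by positivity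
      linarith
    · have h2 : a ≤ u^2*a := by
        nlinarith [mul_le_mul_of_nonneg_right (mul_le_mul h1.le h1.le (by norm_num) (by linarith :
          (0:ℝ) ≤ u)) ha.le]
      have h3 : 1/(u^2*a) ≤ 1/a := one_div_le_one_div_of_le ha h2
      have h4 : (0:ℝ) ≤ 1/(u^3*a) := by positivity
      linarith
  have hE0 : (0:ℝ) ≤ 1/(u^3*a) + 1/a := by positivity
  have hM0 : (0:ℝ) < T/(a*Sa) := by positivity
  -- term B
  have hW : |Sa - G| ≤ (C₂/a)*G := by
    have e : Sa/G - 1 = (Sa-G)/G := by field_simp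
    rw [e, abs_div, abs_of_pos hG, div_le_iff₀ hG] at hS1
    linarith [hS1]
  have termB : T*|Sa-G|/(G*Sa)/(x-a) ≤ C₂ * (T/(a*Sa)) * (1/(u^3*a) + 1/a) := by
    have s1 : T*|Sa-G|/(G*Sa)/(x-a) ≤ T*((C₂/a)*G)/(G*Sa)/(x-a) := by
      gcongr
    have s2 : T*((C₂/a)*G)/(G*Sa)/(x-a) = C₂ * (T/(a*Sa)) * (1/(u*a)) := by
      rw [hxa]
      field_simp
    have s3 : C₂ * (T/(a*Sa)) * (1/(u*a)) ≤ C₂ * (T/(a*Sa)) * (1/(u^3*a) + 1/a) := by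
      apply mul_le_mul_of_nonneg_left hine1
      positivity
    linarith [s1, s2 ▸ s1, s3, s2]
  -- term A
  have termA : J/G/(x-a) ≤ 2*K * (T/(a*Sa)) * (1/(u^3*a) + 1/a) := by
    have s1 : J/G/(x-a) = J/(G*(x-a)) := by rw [div_div]
    have s2 : J/(G*(x-a)) ≤ K*J/(Sa*(x-a)) := by
      rw [div_le_div_iff₀ (by positivity) (by positivity)]
      have h1 : J*Sa ≤ J*(K*G) := mul_le_mul_of_nonneg_left hS2 hJ0
      nlinarith [h1, hxa0]
    have s3 : K*J/(Sa*(x-a)) ≤ K*(T*x/(x-a)^2)/(Sa*(x-a)) := by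
      gcongr
    have s4 : K*(T*x/(x-a)^2)/(Sa*(x-a)) = K * (T/(a*Sa)) * ((u+1)/(u^3*a)) := by
      rw [hxa, hxau]
      field_simp
    have s5 : K * (T/(a*Sa)) * ((u+1)/(u^3*a)) ≤ 2*K * (T/(a*Sa)) * (1/(u^3*a) + 1/a) := by
      have e : (u+1)/(u^3*a) = 1/(u^3*a) + 1/(u^2*a) := by field_simp; ring
      have h1 : (u+1)/(u^3*a) ≤ 2*(1/(u^3*a) + 1/a) := by
        rw [e]
        have h2 : (0:ℝ) ≤ 1/(u^3*a) := by positivity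
        have h2b : (0:ℝ) ≤ 1/a := by positivity
        linarith [hine2]
      calc K * (T/(a*Sa)) * ((u+1)/(u^3*a)) ≤ K * (T/(a*Sa)) * (2*(1/(u^3*a) + 1/a)) := by
            apply mul_le_mul_of_nonneg_left h1; positivity
        _ = 2*K * (T/(a*Sa)) * (1/(u^3*a) + 1/a) := by ring
    calc J/G/(x-a) = J/(G*(x-a)) := s1
      _ ≤ K*J/(Sa*(x-a)) := s2
      _ ≤ K*(T*x/(x-a)^2)/(Sa*(x-a)) := s3
      _ = K * (T/(a*Sa)) * ((u+1)/(u^3*a)) := s4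
      _ ≤ 2*K * (T/(a*Sa)) * (1/(u^3*a) + 1/a) := s5
  -- combine
  have hsplit2 : (T*|Sa-G|/(G*Sa) + J/G)/(x-a) =
      T*|Sa-G|/(G*Sa)/(x-a) + J/G/(x-a) := by
    rw [add_div]
  rw [hsplit2]
  calc T*|Sa-G|/(G*Sa)/(x-a) + J/G/(x-a) ≤
      C₂ * (T/(a*Sa)) * (1/(u^3*a) + 1/a) + 2*K * (T/(a*Sa)) * (1/(u^3*a) + 1/a) := by
        linarith [termB, termA]
    _ = (2*K + C₂) * (T/(a*Sa)) * (1/(u^3*a) + 1/a) := by ring
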